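/- Let Ω be a probability amplitude on ℝⁿ and M an n×n real symmetric positive definite matrix, diagonalized as M = Oᵀ Λ O with O orthogonal and Λ = diag(λ₁,…,λₙ), λᵢ > 0. Define Tᵢ(q) := √λᵢ Σ_{k} O_{ik} ∂_k ln(Ω(q)²) for i = 1,…,n. Then: (i) ⟨Tᵢ⟩ = 0 for every i; (ii) ⟨Q⟩ = (ħ²/8) Σ_{i=1}^{n} Cov(Tᵢ,Tᵢ); and (iii) for every continuously differentiable T₀ square-integrable with respect to Ω² dq with the decay hypotheses that make integration by parts valid, Σ_{i=1}^{n} Cov(T₀,Tᵢ)² = ⟨∇T₀⟩ · M ⟨∇T₀⟩. -/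

import Mathlib

open MeasureTheory Matrix Filter

/-- Partial derivative `∂ⱼ f` of a function on `ℝⁿ`. -/
noncomputable def pd {n : ℕ} (j : Fin n) (f : (Fin n → ℝ) → ℝ) (q : Fin n → ℝ) : ℝ :=
  fderiv ℝ f q (Pi.single j 1)

/-- Mean value `⟨T⟩ = ∫ Ω² T` with respect to the probability density `Ω²`. -/
noncomputable def expec {n : ℕ} (Ω T : (Fin n → ℝ) → ℝ) : ℝ :=
  ∫ q, (Ω q) ^ 2 * T q

/-- Covariance `Cov(T,T') = ⟨TT'⟩ - ⟨T⟩⟨T'⟩` with respect to `Ω²`. -/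
noncomputable def cov {n : ℕ} (Ω T T' : (Fin n → ℝ) → ℝ) : ℝ :=
  expec Ω (fun q => T q * T' q) - expec Ω T * expec Ω T'

/-- Mean value of the quantum potential `⟨Q⟩ = -(ħ²/2) ∫ Ω Σⱼₖ Mⱼₖ ∂ⱼ∂ₖΩ`. -/
noncomputable def meanQ {n : ℕ} (hbar : ℝ) (M : Matrix (Fin n) (Fin n) ℝ)
    (Ω : (Fin n → ℝ) → ℝ) : ℝ :=
  -(hbar ^ 2 / 2) * ∫ q, Ω q * ∑ j, ∑ k, M j k * pd j (pd k Ω) q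

/-- The auxiliary functions `Tᵢ(q) = √λᵢ Σₖ Oᵢₖ ∂ₖ ln Ω²(q)`. -/
noncomputable def auxT {n : ℕ} (lam : Fin n → ℝ) (O : Matrix (Fin n) (Fin n) ℝ)
    (Ω : (Fin n → ℝ) → ℝ) (i : Fin n) (q : Fin n → ℝ) : ℝ :=
  Real.sqrt (lam i) * ∑ k, O i k * pd k (fun x => Real.log ((Ω x) ^ 2)) q

/- ### Auxiliary lemmas -/

lemma pd_contDiff' {n : ℕ} {Ω : (Fin n → ℝ) → ℝ} (h : ContDiff ℝ 2 Ω) (k : Fin n) :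
    ContDiff ℝ 1 (pd k Ω) := by
  have h1 : ContDiff ℝ 1 (fderiv ℝ Ω) := h.fderiv_right (by norm_num)
  exact h1.clm_apply contDiff_const

lemma pd_mul' {n : ℕ} {f g : (Fin n → ℝ) → ℝ} {q : Fin n → ℝ}
    (hf : DifferentiableAt ℝ f q) (hg : DifferentiableAt ℝ g q) (j : Fin n) :
    pd j (fun x => f x * g x) q = pd j f q * g q + f q * pd j g q := by
  unfold pd
  rw [fderiv_fun_mul hf hg]
  simp only [ContinuousLinearMap.add_apply, ContinuousLinearMap.smul_apply, smul_eq_mul]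
  ring

lemma pd_log' {n : ℕ} {Ω : (Fin n → ℝ) → ℝ} {q : Fin n → ℝ}
    (hΩ : DifferentiableAt ℝ Ω q) (hpos : Ω q ≠ 0) (k : Fin n) :
    pd k (fun x => Real.log ((Ω x) ^ 2)) q = 2 * pd k Ω q / Ω q := by
  have he : (fun x => Real.log ((Ω x) ^ 2)) = fun x => 2 * Real.log (Ω x) := by
    funext x; rw [Real.log_pow]; push_cast; ring
  rw [he]
  unfold pd
  have hlog : HasFDerivAt (fun x => Real.log (Ω x)) ((Ω q)⁻¹ • fderiv ℝ Ω q) q :=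
    (hΩ.hasFDerivAt).log hpos
  have h2 := hlog.const_mul (2 : ℝ)
  rw [h2.fderiv]
  simp only [ContinuousLinearMap.smul_apply, smul_eq_mul]
  field_simp

lemma two_mul_abs_le {a b : ℝ} : |2 * a * b| ≤ a ^ 2 + b ^ 2 := by
  have h := sq_nonneg (|a| - |b|)
  have h2 : |2 * a * b| = 2 * |a| * |b| := by
    rw [abs_mul, abs_mul]; simp
  nlinarith [sq_abs a, sq_abs b]

lemma alg_Mjk {n : ℕ} (lam : Fin n → ℝ) (O M : Matrix (Fin n) (Fin n) ℝ)
    (hdiag : M = Oᵀ * Matrix.diagonal lam * O) (j k : Fin n) :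
    M j k = ∑ i, lam i * (O i j * O i k) := by
  rw [hdiag]
  simp [Matrix.mul_apply, Matrix.diagonal, Matrix.transpose_apply, Finset.sum_mul]
  refine Finset.sum_congr rfl fun i _ => by ring

lemma alg_sum_swap {n : ℕ} (lam : Fin n → ℝ) (O M : Matrix (Fin n) (Fin n) ℝ)
    (I : Fin n → Fin n → ℝ)
    (hMjk : ∀ j k, M j k = ∑ i, lam i * (O i j * O i k)) :
    ∑ i, lam i * ∑ j, ∑ k, (O i j * O i k) * (4 * I j k)
      = ∑ j, ∑ k, M j k * (4 * I j k) := by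
  simp_rw [hMjk, Finset.sum_mul, Finset.mul_sum]
  rw [Finset.sum_comm]
  refine Finset.sum_congr rfl fun j _ => ?_
  rw [Finset.sum_comm]
  exact Finset.sum_congr rfl fun k _ => Finset.sum_congr rfl fun i _ => by ring

lemma alg_quadform {n : ℕ} (lam : Fin n → ℝ) (hlam : ∀ i, 0 < lam i)
    (O M : Matrix (Fin n) (Fin n) ℝ) (v : Fin n → ℝ)
    (hMjk : ∀ j k, M j k = ∑ i, lam i * (O i j * O i k)) :
    ∑ i, (Real.sqrt (lam i) * ∑ k, O i k * (-(v k))) ^ 2 = v ⬝ᵥ M.mulVec v := by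
  have hdot : v ⬝ᵥ M.mulVec v = ∑ j, ∑ k, M j k * (v j * v k) := by
    simp [dotProduct, Matrix.mulVec, Finset.mul_sum]
    refine Finset.sum_congr rfl fun j _ => Finset.sum_congr rfl fun k _ => by ring
  rw [hdot]
  have hterm : ∀ i, (Real.sqrt (lam i) * ∑ k, O i k * (-(v k))) ^ 2
      = lam i * ∑ j, ∑ k, (O i j * O i k) * (v j * v k) := by
    intro i
    have hs : Real.sqrt (lam i) ^ 2 = lam i := Real.sq_sqrt (hlam i).le
    rw [mul_pow, hs, sq, Finset.sum_mul_sum]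
    congr 1
    refine Finset.sum_congr rfl fun j _ => Finset.sum_congr rfl fun k _ => by ring
  simp_rw [hterm, hMjk, Finset.sum_mul, Finset.mul_sum]
  rw [Finset.sum_comm]
  refine Finset.sum_congr rfl fun j _ => ?_
  rw [Finset.sum_comm]
  exact Finset.sum_congr rfl fun k _ => Finset.sum_congr rfl fun i _ => by ring

/-- properties of the auxiliary functions `Tᵢ`:
`⟨Tᵢ⟩ = 0`, `⟨Q⟩ = (ħ²/8) Σᵢ Cov(Tᵢ,Tᵢ)`, and
`Σᵢ Cov(T₀,Tᵢ)² = ⟨∇T₀⟩ ⋅ M ⟨∇T₀⟩` for suitable `T₀`. -/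
theorem auxT_properties {n : ℕ} (hn : 1 ≤ n) (hbar : ℝ) (hhbar : 0 < hbar)
    (Ω : (Fin n → ℝ) → ℝ) (hΩc : ContDiff ℝ 2 Ω) (hΩpos : ∀ q, 0 < Ω q)
    (hΩnorm : ∫ q, (Ω q) ^ 2 = 1)
    (M : Matrix (Fin n) (Fin n) ℝ) (hM : M.PosDef)
    (O : Matrix (Fin n) (Fin n) ℝ) (hO : Oᵀ * O = 1) (hO' : O * Oᵀ = 1)
    (lam : Fin n → ℝ) (hlam : ∀ i, 0 < lam i)
    (hdiag : M = Oᵀ * Matrix.diagonal lam * O)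
    -- all integrals appearing converge absolutely
    (hint1 : ∀ j k, Integrable (fun q => Ω q * pd j (pd k Ω) q))
    (hint2 : ∀ j k, Integrable (fun q => pd j Ω q * pd k Ω q))
    (hint3 : ∀ k, Integrable (fun q => (Ω q) ^ 2 * pd k (fun x => Real.log ((Ω x) ^ 2)) q))
    (hint4 : ∀ j k, Integrable (fun q => (Ω q) ^ 2 *
      (pd j (fun x => Real.log ((Ω x) ^ 2)) q * pd k (fun x => Real.log ((Ω x) ^ 2)) q)))
    -- all boundary terms in integration by parts vanish
    (hbd1 : ∀ j k, ∫ q, pd j (fun x => Ω x * pd k Ω x) q = 0)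
    (hbd2 : ∀ k, ∫ q, pd k (fun x => (Ω x) ^ 2) q = 0) :
    (∀ i, expec Ω (auxT lam O Ω i) = 0) ∧
    meanQ hbar M Ω = hbar ^ 2 / 8 * ∑ i, cov Ω (auxT lam O Ω i) (auxT lam O Ω i) ∧
    (∀ T₀ : (Fin n → ℝ) → ℝ, ContDiff ℝ 1 T₀ →
      Integrable (fun q => (Ω q) ^ 2 * (T₀ q) ^ 2) →
      Integrable (fun q => (Ω q) ^ 2 * T₀ q) →
      (∀ k, Integrable (fun q => (Ω q) ^ 2 * pd k T₀ q)) →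
      Tendsto (fun q => T₀ q * (Ω q) ^ 2) (cocompact (Fin n → ℝ)) (nhds 0) →
      (∀ k, ∫ q, pd k (fun x => T₀ x * (Ω x) ^ 2) q = 0) →
      ∑ i, (cov Ω T₀ (auxT lam O Ω i)) ^ 2 =
        (fun k => expec Ω (pd k T₀)) ⬝ᵥ M.mulVec (fun k => expec Ω (pd k T₀))) := by
  have hΩd : Differentiable ℝ Ω := hΩc.differentiable (by norm_num)
  have hpdc : ∀ k, ContDiff ℝ 1 (pd k Ω) := fun k => pd_contDiff' hΩc k
  have hpdd : ∀ k, Differentiable ℝ (pd k Ω) := fun k => (hpdc k).differentiable one_ne_zero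
  have hΩne : ∀ q, Ω q ≠ 0 := fun q => (hΩpos q).ne'
  -- rewrite the logarithmic derivative everywhere
  have hL : ∀ (k : Fin n) (q : Fin n → ℝ),
      pd k (fun x => Real.log ((Ω x) ^ 2)) q = 2 * pd k Ω q / Ω q :=
    fun k q => pd_log' (hΩd q) (hΩne q) k
  simp only [hL] at hint3 hint4
  have hMjk : ∀ j k, M j k = ∑ i, lam i * (O i j * O i k) := alg_Mjk lam O M hdiag
  -- pointwise identities
  have hΩg : ∀ (k : Fin n) (q : Fin n → ℝ),
      (Ω q) ^ 2 * (2 * pd k Ω q / Ω q) = 2 * (Ω q * pd k Ω q) := by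
    intro k q; field_simp [hΩne q]
  have hpdsq : ∀ (k : Fin n) (q : Fin n → ℝ),
      pd k (fun x => (Ω x) ^ 2) q = 2 * (Ω q * pd k Ω q) := by
    intro k q
    have he : (fun x => (Ω x) ^ 2) = fun x => Ω x * Ω x := by funext x; ring
    rw [he, pd_mul' (hΩd q) (hΩd q)]; ring
  -- ⟨∂ₖ ln Ω²⟩ = 0
  have hA : ∀ k, ∫ q, (Ω q) ^ 2 * (2 * pd k Ω q / Ω q) = 0 := by
    intro k
    have he : (fun q => (Ω q) ^ 2 * (2 * pd k Ω q / Ω q))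
        = fun q => pd k (fun x => (Ω x) ^ 2) q := by
      funext q; rw [hΩg, hpdsq]
    rw [he, hbd2 k]
  -- integration by parts for second derivatives
  have hB : ∀ j k, ∫ q, Ω q * pd j (pd k Ω) q = -∫ q, pd j Ω q * pd k Ω q := by
    intro j k
    have hpt : (fun q => pd j (fun x => Ω x * pd k Ω x) q)
        = fun q => pd j Ω q * pd k Ω q + Ω q * pd j (pd k Ω) q :=
      funext fun q => pd_mul' (hΩd q) (hpdd k q) j
    have hb := hbd1 j k
    rw [hpt, integral_add (hint2 j k) (hint1 j k)] at hb
    linarith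
  have hC : ∀ (j k : Fin n) (q : Fin n → ℝ),
      (Ω q) ^ 2 * ((2 * pd j Ω q / Ω q) * (2 * pd k Ω q / Ω q))
        = 4 * (pd j Ω q * pd k Ω q) := by
    intro j k q; field_simp [hΩne q]; ring
  have hCint : ∀ j k, ∫ q, (Ω q) ^ 2 * ((2 * pd j Ω q / Ω q) * (2 * pd k Ω q / Ω q))
      = 4 * ∫ q, pd j Ω q * pd k Ω q := by
    intro j k
    simp_rw [hC j k]
    exact integral_const_mul _ _
  -- Part (i)
  have part1 : ∀ i, expec Ω (auxT lam O Ω i) = 0 := by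
    intro i
    unfold expec auxT
    simp only [hL]
    have hrw : ∀ q : Fin n → ℝ,
        (Ω q) ^ 2 * (Real.sqrt (lam i) * ∑ k, O i k * (2 * pd k Ω q / Ω q))
          = ∑ k, (Real.sqrt (lam i) * O i k) * ((Ω q) ^ 2 * (2 * pd k Ω q / Ω q)) := by
      intro q
      rw [Finset.mul_sum, Finset.mul_sum]
      exact Finset.sum_congr rfl fun k _ => by ring
    simp_rw [hrw]
    rw [integral_finset_sum _ (fun k _ => (hint3 k).const_mul _)]
    simp_rw [integral_const_mul, hA, mul_zero, Finset.sum_const_zero]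
  -- Part (ii)
  have hQ : meanQ hbar M Ω
      = hbar ^ 2 / 2 * ∑ j, ∑ k, M j k * ∫ q, pd j Ω q * pd k Ω q := by
    unfold meanQ
    have hin : ∀ q : Fin n → ℝ, Ω q * ∑ j, ∑ k, M j k * pd j (pd k Ω) q
        = ∑ j, ∑ k, M j k * (Ω q * pd j (pd k Ω) q) := by
      intro q
      rw [Finset.mul_sum]
      refine Finset.sum_congr rfl fun j _ => ?_
      rw [Finset.mul_sum]
      exact Finset.sum_congr rfl fun k _ => by ring
    simp_rw [hin]
    rw [integral_finset_sum _
      (fun j _ => integrable_finset_sum _ (fun k _ => (hint1 j k).const_mul (M j k)))]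
    have hinner : ∀ j : Fin n, ∫ q, ∑ k, M j k * (Ω q * pd j (pd k Ω) q)
        = ∑ k, M j k * -∫ q, pd j Ω q * pd k Ω q := by
      intro j
      rw [integral_finset_sum _ (fun k _ => (hint1 j k).const_mul (M j k))]
      simp_rw [integral_const_mul, hB]
    simp_rw [hinner, mul_neg, Finset.sum_neg_distrib]
    ring
  have hTT : ∀ i, expec Ω (fun q => auxT lam O Ω i q * auxT lam O Ω i q)
      = lam i * ∑ j, ∑ k, (O i j * O i k) * (4 * ∫ q, pd j Ω q * pd k Ω q) := by
    intro i
    unfold expec auxT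
    simp only [hL]
    have hs : Real.sqrt (lam i) * Real.sqrt (lam i) = lam i :=
      Real.mul_self_sqrt (hlam i).le
    have hrw : ∀ q : Fin n → ℝ,
        (Ω q) ^ 2 * ((Real.sqrt (lam i) * ∑ j, O i j * (2 * pd j Ω q / Ω q)) *
          (Real.sqrt (lam i) * ∑ k, O i k * (2 * pd k Ω q / Ω q)))
        = ∑ j, ∑ k, (lam i * (O i j * O i k)) *
            ((Ω q) ^ 2 * ((2 * pd j Ω q / Ω q) * (2 * pd k Ω q / Ω q))) := by
      intro q
      have hstep : (Ω q) ^ 2 * ((Real.sqrt (lam i) * ∑ j, O i j * (2 * pd j Ω q / Ω q)) *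
          (Real.sqrt (lam i) * ∑ k, O i k * (2 * pd k Ω q / Ω q)))
          = lam i * ((Ω q) ^ 2 * ((∑ j, O i j * (2 * pd j Ω q / Ω q)) *
            (∑ k, O i k * (2 * pd k Ω q / Ω q)))) := by
        conv_rhs => rw [← hs]
        ring
      rw [hstep]
      rw [Finset.sum_mul_sum, Finset.mul_sum, Finset.mul_sum]
      refine Finset.sum_congr rfl fun j _ => ?_
      rw [Finset.mul_sum, Finset.mul_sum]
      exact Finset.sum_congr rfl fun k _ => by ring
    simp_rw [hrw]
    rw [integral_finset_sum _
      (fun j _ => integrable_finset_sum _ (fun k _ => (hint4 j k).const_mul _))]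
    have hinner : ∀ j : Fin n, ∫ q, ∑ k, (lam i * (O i j * O i k)) *
        ((Ω q) ^ 2 * ((2 * pd j Ω q / Ω q) * (2 * pd k Ω q / Ω q)))
        = ∑ k, (lam i * (O i j * O i k)) * (4 * ∫ q, pd j Ω q * pd k Ω q) := by
      intro j
      rw [integral_finset_sum _ (fun k _ => (hint4 j k).const_mul _)]
      simp_rw [integral_const_mul, hCint]
    simp_rw [hinner, Finset.mul_sum]
    refine Finset.sum_congr rfl fun j _ => Finset.sum_congr rfl fun k _ => by ring
  have part2 : meanQ hbar M Ω
      = hbar ^ 2 / 8 * ∑ i, cov Ω (auxT lam O Ω i) (auxT lam O Ω i) := by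
    have hcov : ∀ i, cov Ω (auxT lam O Ω i) (auxT lam O Ω i)
        = lam i * ∑ j, ∑ k, (O i j * O i k) * (4 * ∫ q, pd j Ω q * pd k Ω q) := by
      intro i
      unfold cov
      rw [part1 i, mul_zero, sub_zero, hTT i]
    rw [hQ]
    simp_rw [hcov]
    rw [alg_sum_swap lam O M _ hMjk]
    rw [Finset.mul_sum, Finset.mul_sum]
    refine Finset.sum_congr rfl fun j _ => ?_
    rw [Finset.mul_sum, Finset.mul_sum]
    exact Finset.sum_congr rfl fun k _ => by ring
  -- Part (iii)
  refine ⟨part1, part2, ?_⟩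
  intro T₀ hT₀c hT₀sq hT₀int hT₀pd hT₀tend hT₀bd
  have hT₀d : Differentiable ℝ T₀ := hT₀c.differentiable one_ne_zero
  -- integrability of Ω² T₀ ∂ₖ ln Ω²
  have hintD : ∀ k, Integrable (fun q => (Ω q) ^ 2 * (T₀ q * (2 * pd k Ω q / Ω q))) := by
    intro k
    have hpt : ∀ q : Fin n → ℝ, (Ω q) ^ 2 * (T₀ q * (2 * pd k Ω q / Ω q))
        = 2 * (Ω q * T₀ q) * pd k Ω q := by
      intro q; field_simp [hΩne q]
    have hcont : Continuous fun q => (Ω q) ^ 2 * (T₀ q * (2 * pd k Ω q / Ω q)) := by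
      have : (fun q => (Ω q) ^ 2 * (T₀ q * (2 * pd k Ω q / Ω q)))
          = fun q => 2 * (Ω q * T₀ q) * pd k Ω q := funext hpt
      rw [this]
      exact ((continuous_const.mul (hΩc.continuous.mul hT₀c.continuous)).mul
        (hpdc k).continuous)
    refine Integrable.mono' ((hT₀sq.add (hint2 k k))) hcont.aestronglyMeasurable ?_
    filter_upwards with q
    rw [hpt]
    have h1 : |2 * (Ω q * T₀ q) * pd k Ω q| ≤ (Ω q * T₀ q) ^ 2 + (pd k Ω q) ^ 2 :=
      two_mul_abs_le
    have h2 : (Ω q * T₀ q) ^ 2 = (Ω q) ^ 2 * (T₀ q) ^ 2 := by ring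
    have h3 : (pd k Ω q) ^ 2 = pd k Ω q * pd k Ω q := sq (pd k Ω q) ▸ by ring
    simp only [Real.norm_eq_abs]
    rw [h2, h3] at h1
    exact h1
  -- ⟨T₀ ∂ₖ ln Ω²⟩ = -⟨∂ₖ T₀⟩
  have hD : ∀ k, ∫ q, (Ω q) ^ 2 * (T₀ q * (2 * pd k Ω q / Ω q))
      = -(expec Ω (pd k T₀)) := by
    intro k
    have hb := hT₀bd k
    have hpt : (fun q => pd k (fun x => T₀ x * (Ω x) ^ 2) q)
        = fun q => (Ω q) ^ 2 * pd k T₀ q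
          + (Ω q) ^ 2 * (T₀ q * (2 * pd k Ω q / Ω q)) := by
      funext q
      rw [pd_mul' (g := fun x => (Ω x) ^ 2) (hT₀d q) ((hΩd q).pow 2) k, hpdsq k]
      have hg := hΩg k q
      field_simp [hΩne q]
    rw [hpt, integral_add (hT₀pd k) (hintD k)] at hb
    unfold expec
    linarith
  -- covariance with T₀
  have hcov3 : ∀ i, cov Ω T₀ (auxT lam O Ω i)
      = Real.sqrt (lam i) * ∑ k, O i k * (-(expec Ω (pd k T₀))) := by
    intro i
    unfold cov
    rw [part1 i, mul_zero, sub_zero]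
    unfold expec auxT
    simp only [hL]
    have hrw : ∀ q : Fin n → ℝ,
        (Ω q) ^ 2 * (T₀ q * (Real.sqrt (lam i) * ∑ k, O i k * (2 * pd k Ω q / Ω q)))
        = ∑ k, (Real.sqrt (lam i) * O i k) *
            ((Ω q) ^ 2 * (T₀ q * (2 * pd k Ω q / Ω q))) := by
      intro q
      rw [Finset.mul_sum, Finset.mul_sum, Finset.mul_sum]
      exact Finset.sum_congr rfl fun k _ => by ring
    simp_rw [hrw]
    rw [integral_finset_sum _ (fun k _ => (hintD k).const_mul _)]
    simp_rw [integral_const_mul, hD]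
    rw [Finset.mul_sum]
    exact Finset.sum_congr rfl fun k _ => by unfold expec; ring
  simp_rw [hcov3]
  exact alg_quadform lam hlam O M _ hMjk
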